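/- arXiv:dg-ga/9603009 — 2 statements merged into one kernel-verified Lean document; each statement's English description precedes it below -/
import Mathlib

section
/- Let U ⊆ ℝⁿ be open, k ≥ 1, and let 𝓛 be an even dual form of codegree k on U. Then (∂𝓛/∂p_A^k)(x, p) does not depend on the k-th column of p, so the function δ̄𝓛 : U × Matrix(n×(k−1), ℝ) → ℝ given by (δ̄𝓛)(x, p̂) := (−1)^{k−1} Σ_{A=1}^{n} (∂²𝓛/∂x^A∂p_A^k)(x, (p̂ | c)) is well-defined (independent of the choice of the appended k-th column c ∈ ℝⁿ). Moreover δ̄𝓛 is an even dual form of codegree k−1 on U, and if k ≥ 2 then δ̄(δ̄𝓛) = 0. -/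
open MeasureTheory
open scoped BigOperators

noncomputable section

/-- Product of matrices given as functions (entry `(i,k)` is `∑ j, M i j * N j k`). -/
def mmul {a b c : ℕ} (M : Fin a → Fin b → ℝ) (N : Fin b → Fin c → ℝ) :
    Fin a → Fin c → ℝ :=
  fun i k => ∑ j, M i j * N j k

/-- Determinant of a square matrix given as a function. -/
def fdet {a : ℕ} (M : Fin a → Fin a → ℝ) : ℝ :=
  Matrix.det (Matrix.of M)

/-- Partial derivative of a function of a matrix with respect to the `(i,j)` entry. -/
def pdM {a b : ℕ} (L : (Fin a → Fin b → ℝ) → ℝ) (i : Fin a) (j : Fin b)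
    (m : Fin a → Fin b → ℝ) : ℝ :=
  deriv (fun t : ℝ => L (fun i' j' => m i' j' + (if i' = i ∧ j' = j then t else 0))) 0

/-- Partial derivative of a function of a vector with respect to the `i`-th coordinate. -/
def pdV {a : ℕ} (f : (Fin a → ℝ) → ℝ) (i : Fin a) (x : Fin a → ℝ) : ℝ :=
  deriv (fun t : ℝ => f (fun i' => x i' + (if i' = i then t else 0))) 0

/-- The fundamental equations for a function of an `a × b` matrix:
for all rows `i₁, i₂` and columns `j₁, j₂`,
`∂²L/∂m_{i₁}^{j₁}∂m_{i₂}^{j₂} + ∂²L/∂m_{i₂}^{j₁}∂m_{i₁}^{j₂} = 0`. -/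
def FundEqs {a b : ℕ} (L : (Fin a → Fin b → ℝ) → ℝ) : Prop :=
  ∀ (i₁ i₂ : Fin a) (j₁ j₂ : Fin b) (m : Fin a → Fin b → ℝ),
    pdM (fun m' => pdM L i₂ j₂ m') i₁ j₁ m + pdM (fun m' => pdM L i₁ j₂ m') i₂ j₁ m = 0

/-- The velocity matrix of a path `γ`: `(vel γ t) F A = ∂γ^A/∂t^F (t)`. -/
def vel {r n : ℕ} (γ : (Fin r → ℝ) → (Fin n → ℝ)) (t : Fin r → ℝ) :
    Fin r → Fin n → ℝ :=
  fun F A => pdV (fun s => γ s A) F t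

/-- The matrix of gradients of a copath `f`: `(grad f x) A K = ∂f^K/∂x^A (x)`. -/
def grad {n k : ℕ} (f : (Fin n → ℝ) → (Fin k → ℝ)) (x : Fin n → ℝ) :
    Fin n → Fin k → ℝ :=
  fun A K => pdV (fun y => f y K) A x

/-- An even `r`-form on an open set `U ⊆ ℝⁿ`: a smooth function `L(x, ẋ)` of a point
`x` and an `r × n` matrix `ẋ` which is covariant (`L(x, h·ẋ) = det h · L(x, ẋ)` for
invertible `h`) and satisfies the fundamental equations in the entries of `ẋ`. -/
def IsEvenForm {n r : ℕ} (U : Set (Fin n → ℝ))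
    (L : (Fin n → ℝ) → (Fin r → Fin n → ℝ) → ℝ) : Prop :=
  ContDiffOn ℝ (⊤ : ℕ∞)
      (fun q : (Fin n → ℝ) × (Fin r → Fin n → ℝ) => L q.1 q.2)
      (U ×ˢ (Set.univ : Set (Fin r → Fin n → ℝ))) ∧
  (∀ x ∈ U, ∀ (xdot : Fin r → Fin n → ℝ) (h : Fin r → Fin r → ℝ), fdet h ≠ 0 →
    L x (mmul h xdot) = fdet h * L x xdot) ∧
  (∀ x ∈ U, FundEqs (L x))

/-- The differential of a Lagrangian of paths `L(x, ẋ)`: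
`ΔL(x, (ẋ; ẏ)) = (−1)^r Σ_A ẏ^A (∂L/∂x^A − Σ_{F,B} ẋ_F^B ∂²L/∂x^B∂ẋ_F^A)`,
where `ẋ` consists of the first `r` rows and `ẏ` is the last row of the argument. -/
def Dform {n r : ℕ} (L : (Fin n → ℝ) → (Fin r → Fin n → ℝ) → ℝ) :
    (Fin n → ℝ) → (Fin (r + 1) → Fin n → ℝ) → ℝ :=
  fun x M => (-1 : ℝ) ^ r * ∑ A, M (Fin.last r) A *
    (pdV (fun x' => L x' (fun F => M (Fin.castSucc F))) A x
      - ∑ F, ∑ B, M (Fin.castSucc F) B *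
          pdV (fun x' => pdM (L x') F A (fun G => M (Fin.castSucc G))) B x)

/-- An even mixed form of codegree `k` and additional degree `r` on an open set
`U ⊆ ℝⁿ`: a smooth function `𝓛(x, p, w)` which is right-covariant, left-covariant,
admissible, and satisfies the fundamental equations in the entries of the stacked
`(n+r) × k` matrix (`p` over `w`). -/
def IsMixedForm {n k r : ℕ} (U : Set (Fin n → ℝ))
    (L : (Fin n → ℝ) → (Fin n → Fin k → ℝ) → (Fin r → Fin k → ℝ) → ℝ) : Prop :=
  ContDiffOn ℝ (⊤ : ℕ∞)
      (fun q : (Fin n → ℝ) × (Fin n → Fin k → ℝ) × (Fin r → Fin k → ℝ) =>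
        L q.1 q.2.1 q.2.2)
      (U ×ˢ (Set.univ : Set ((Fin n → Fin k → ℝ) × (Fin r → Fin k → ℝ)))) ∧
  (∀ x ∈ U, ∀ (p : Fin n → Fin k → ℝ) (w : Fin r → Fin k → ℝ) (g : Fin k → Fin k → ℝ),
    fdet g ≠ 0 → L x (mmul p g) (mmul w g) = fdet g * L x p w) ∧
  (∀ x ∈ U, ∀ (p : Fin n → Fin k → ℝ) (w : Fin r → Fin k → ℝ) (h : Fin r → Fin r → ℝ),
    fdet h ≠ 0 → L x p (mmul h w) = fdet h * L x p w) ∧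
  (∀ x ∈ U, ∀ (p : Fin n → Fin k → ℝ) (w : Fin r → Fin k → ℝ) (a : Fin n → Fin r → ℝ),
    L x (p + mmul a w) w = L x p w) ∧
  (∀ x ∈ U, FundEqs (fun m : Fin (n + r) → Fin k → ℝ =>
    L x (fun A => m (Fin.castAdd r A)) (fun F => m (Fin.natAdd n F))))

/-- The differential of a mixed Lagrangian `𝓛(x, p, w)`:
`Δ𝓛(x, p, ŵ) = (−1)^r Σ_{K,A} w'^K ∂²𝓛/∂x^A∂p_A^K (x, p, w)`, where `ŵ` has first
`r` rows `w` and last row `w'`. -/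
def Dmix {n k r : ℕ}
    (L : (Fin n → ℝ) → (Fin n → Fin k → ℝ) → (Fin r → Fin k → ℝ) → ℝ) :
    (Fin n → ℝ) → (Fin n → Fin k → ℝ) → (Fin (r + 1) → Fin k → ℝ) → ℝ :=
  fun x p what => (-1 : ℝ) ^ r * ∑ K, ∑ A, what (Fin.last r) K *
    pdV (fun x' => pdM (fun p' => L x' p' (fun F => what (Fin.castSucc F))) A K p) A x

/-- An even dual form of codegree `k` on an open set `U ⊆ ℝⁿ`: a smooth function
`𝓛(x, p)` of a point `x` and an `n × k` matrix `p` of momenta which is covariant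
(`𝓛(x, p·g) = det g · 𝓛(x, p)` for invertible `g`) and satisfies the fundamental
equations in the entries of `p`. -/
def IsDualForm {n k : ℕ} (U : Set (Fin n → ℝ))
    (L : (Fin n → ℝ) → (Fin n → Fin k → ℝ) → ℝ) : Prop :=
  ContDiffOn ℝ (⊤ : ℕ∞)
      (fun q : (Fin n → ℝ) × (Fin n → Fin k → ℝ) => L q.1 q.2)
      (U ×ˢ (Set.univ : Set (Fin n → Fin k → ℝ))) ∧
  (∀ x ∈ U, ∀ (p : Fin n → Fin k → ℝ) (g : Fin k → Fin k → ℝ), fdet g ≠ 0 →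
    L x (mmul p g) = fdet g * L x p) ∧
  (∀ x ∈ U, FundEqs (L x))

/-- The identity matrix as a function. -/
def idm (n : ℕ) : Fin n → Fin n → ℝ := fun i j => if i = j then 1 else 0

/-- The differential of dual forms: for a dual Lagrangian `𝓛(x, p)` of codegree
`k+1`, `(δ̄𝓛)(x, p̂) := (−1)^k Σ_A ∂²𝓛/∂x^A∂p_A^{k+1} (x, (p̂ | 0))`. -/
def dbar {n : ℕ} (k : ℕ) (L : (Fin n → ℝ) → (Fin n → Fin (k + 1) → ℝ) → ℝ) :
    (Fin n → ℝ) → (Fin n → Fin k → ℝ) → ℝ :=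
  fun x p => (-1 : ℝ) ^ k * ∑ A,
    pdV (fun x' => pdM (L x') A (Fin.last k) (fun B => Fin.snoc (p B) 0)) A x

namespace S18

open Filter Topology Set

/-- standard basis vector -/
def eV {n : ℕ} (A : Fin n) : Fin n → ℝ := fun B => if B = A then 1 else 0

/-- update column `K` of the matrix `m` to `c` -/
def updC {n k : ℕ} (m : Fin n → Fin k → ℝ) (K : Fin k) (c : Fin n → ℝ) :
    Fin n → Fin k → ℝ := fun B => Function.update (m B) K (c B)

/-- append the column `eV A` to `p` -/
def sE {n k : ℕ} (A : Fin n) (p : Fin n → Fin k → ℝ) : Fin n → Fin (k + 1) → ℝ :=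
  fun B => Fin.snoc (p B) (eV A B)

lemma hasDerivAt_line {n : ℕ} (x v : Fin n → ℝ) (τ : ℝ) :
    HasDerivAt (fun t : ℝ => x + t • v) v τ := by
  simpa using ((hasDerivAt_id τ).smul_const v).const_add x

lemma line_zero {n : ℕ} (x v : Fin n → ℝ) : x + (0 : ℝ) • v = x := by simp

lemma pdV_eq {n : ℕ} (f : (Fin n → ℝ) → ℝ) (A : Fin n) (x : Fin n → ℝ) :
    pdV f A x = deriv (fun t : ℝ => f (x + t • eV A)) 0 := by
  unfold pdV
  congr 1
  funext t
  congr 1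
  funext i
  by_cases h : i = A <;> simp [eV, h]

lemma pdM_path {a b : ℕ} (F : (Fin a → Fin b → ℝ) → ℝ) (A : Fin a) (K : Fin b)
    (m : Fin a → Fin b → ℝ) :
    pdM F A K m = deriv (fun t : ℝ => F (updC m K ((fun B => m B K) + t • eV A))) 0 := by
  unfold pdM
  congr 1
  funext t
  congr 1
  funext i j
  by_cases hj : j = K
  · subst hj
    by_cases hi : i = A <;> simp [updC, eV, Function.update_apply, hi]
  · simp [updC, eV, Function.update_apply, hj]

lemma hasDerivAt_affine (C D : ℝ) (τ : ℝ) : HasDerivAt (fun t : ℝ => C + t * D) D τ := by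
  simpa using ((hasDerivAt_id τ).mul_const D).const_add C

lemma deriv_affine (C D : ℝ) : deriv (fun t : ℝ => C + t * D) 0 = D :=
  (hasDerivAt_affine C D 0).deriv

lemma eventually_line_mem {n : ℕ} {U : Set (Fin n → ℝ)} (hU : IsOpen U)
    {x : Fin n → ℝ} (hx : x ∈ U) (v : Fin n → ℝ) :
    ∀ᶠ t : ℝ in 𝓝 0, x + t • v ∈ U := by
  have hc : Continuous (fun t : ℝ => x + t • v) :=
    continuous_const.add (continuous_id.smul continuous_const)
  have := hc.continuousAt (x := (0:ℝ))
  rw [ContinuousAt, line_zero] at this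
  exact this.eventually (hU.eventually_mem hx)

lemma pdV_congrU {n : ℕ} {U : Set (Fin n → ℝ)} (hU : IsOpen U)
    {x : Fin n → ℝ} (hx : x ∈ U) {f g : (Fin n → ℝ) → ℝ}
    (h : Set.EqOn f g U) (A : Fin n) : pdV f A x = pdV g A x := by
  rw [pdV_eq, pdV_eq]
  apply Filter.EventuallyEq.deriv_eq
  filter_upwards [eventually_line_mem hU hx (eV A)] with t ht
  exact h ht

lemma pdV_neg {n : ℕ} (f : (Fin n → ℝ) → ℝ) (A : Fin n) (x : Fin n → ℝ) :
    pdV (fun y => -(f y)) A x = -pdV f A x := by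
  rw [pdV_eq, pdV_eq]
  exact deriv.neg

lemma pdV_const_mul {n : ℕ} (f : (Fin n → ℝ) → ℝ) (a : ℝ) (A : Fin n) (x : Fin n → ℝ) :
    pdV (fun y => a * f y) A x = a * pdV f A x := by
  rw [pdV_eq, pdV_eq]
  exact deriv_const_mul_field a

lemma linear_of_homog {E : Type*} [NormedAddCommGroup E] [NormedSpace ℝ E]
    {f : E → ℝ} (hdiff : DifferentiableAt ℝ f 0)
    (hom : ∀ (s : ℝ) (c : E), f (s • c) = s * f c) (c : E) :
    f c = fderiv ℝ f 0 c := by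
  have hc : HasDerivAt (fun s : ℝ => s • c) c 0 := by
    simpa using (hasDerivAt_id (0:ℝ)).smul_const c
  have h0 : HasFDerivAt f (fderiv ℝ f 0) ((0:ℝ) • c) := by
    rw [zero_smul]; exact hdiff.hasFDerivAt
  have h1 : HasDerivAt (fun s : ℝ => f (s • c)) (fderiv ℝ f 0 c) 0 :=
    h0.comp_hasDerivAt 0 hc
  have h2 : HasDerivAt (fun s : ℝ => f (s • c)) (f c) 0 := by
    have he : (fun s : ℝ => f (s • c)) = fun s => s * f c := funext fun s => hom s c
    rw [he]
    simpa using (hasDerivAt_id (0:ℝ)).mul_const (f c)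
  exact (h2.unique h1)

end S18
namespace S18

/-- diagonal matrix with `s` at position `K` and `1` elsewhere -/
def dg {k : ℕ} (K : Fin k) (s : ℝ) : Fin k → Fin k → ℝ :=
  fun J J' => if J = J' then (if J = K then s else 1) else 0

lemma fdet_dg {k : ℕ} (K : Fin k) (s : ℝ) : fdet (dg K s) = s := by
  have h : Matrix.of (dg K s) = Matrix.diagonal (fun J => if J = K then s else 1) := by
    ext i j
    simp [dg, Matrix.diagonal_apply]
  rw [fdet, h, Matrix.det_diagonal]
  simp [Finset.prod_ite_eq']

lemma mmul_dg {n k : ℕ} (m : Fin n → Fin k → ℝ) (K : Fin k) (c : Fin n → ℝ) (s : ℝ) :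
    mmul (updC m K c) (dg K s) = updC m K (s • c) := by
  funext B J'
  simp only [mmul, dg, mul_ite, mul_one, mul_zero]
  rw [Finset.sum_ite_eq' Finset.univ J' (fun J => if J = K then updC m K c B J * s else updC m K c B J)]
  by_cases h : J' = K <;> simp [updC, Function.update_apply, h, mul_comm]

/-- column swap matrix -/
def sw {k : ℕ} (K K' : Fin k) : Fin k → Fin k → ℝ :=
  fun J J' => if Equiv.swap K K' J = J' then 1 else 0

lemma fdet_sw {k : ℕ} {K K' : Fin k} (h : K ≠ K') : fdet (sw K K') = -1 := by
  have he : Matrix.of (sw K K') = (Equiv.swap K K').permMatrix ℝ := by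
    ext i j
    simp [sw, Equiv.Perm.permMatrix, PEquiv.toMatrix_apply, Equiv.toPEquiv_apply, eq_comm]
  rw [fdet, he, Matrix.det_permutation]
  simp [Equiv.Perm.sign_swap h]

lemma mmul_sw {n k : ℕ} (m : Fin n → Fin k → ℝ) (K K' : Fin k) :
    mmul m (sw K K') = fun B J' => m B (Equiv.swap K K' J') := by
  funext B J'
  simp only [mmul, sw, mul_ite, mul_one, mul_zero]
  have : ∀ J : Fin k, (Equiv.swap K K' J = J') = (J = Equiv.swap K K' J') := by
    intro J
    rw [eq_iff_iff]
    constructor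
    · rintro rfl; simp
    · rintro rfl; simp
  simp only [this]
  rw [Finset.sum_ite_eq' Finset.univ (Equiv.swap K K' J') (fun J => m B J)]
  simp

/-- extend a `k × k` matrix to a `(k+1) × (k+1)` matrix fixing the last coordinate -/
def gh {k : ℕ} (g : Fin k → Fin k → ℝ) : Fin (k + 1) → Fin (k + 1) → ℝ :=
  Matrix.reindex finSumFinEquiv finSumFinEquiv
    (Matrix.fromBlocks (Matrix.of g) 0 0 (1 : Matrix (Fin 1) (Fin 1) ℝ))

lemma fdet_gh {k : ℕ} (g : Fin k → Fin k → ℝ) : fdet (gh g) = fdet g := by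
  have : Matrix.of (gh g) = Matrix.reindex finSumFinEquiv finSumFinEquiv
      (Matrix.fromBlocks (Matrix.of g) 0 0 (1 : Matrix (Fin 1) (Fin 1) ℝ)) := rfl
  rw [fdet, this, Matrix.det_reindex_self, Matrix.det_fromBlocks_zero₂₁]
  simp [fdet]

lemma last_eq_natAdd (k : ℕ) : Fin.last k = Fin.natAdd k (0 : Fin 1) := by
  ext; simp

lemma gh_cc {k : ℕ} (g : Fin k → Fin k → ℝ) (j i : Fin k) :
    gh g (Fin.castSucc j) (Fin.castSucc i) = g j i := by
  show Matrix.reindex _ _ _ (Fin.castAdd 1 j) (Fin.castAdd 1 i) = _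
  simp [Matrix.reindex_apply, finSumFinEquiv_symm_apply_castAdd]

lemma gh_cl {k : ℕ} (g : Fin k → Fin k → ℝ) (j : Fin k) :
    gh g (Fin.castSucc j) (Fin.last k) = 0 := by
  rw [last_eq_natAdd]
  show Matrix.reindex _ _ _ (Fin.castAdd 1 j) (Fin.natAdd k (0 : Fin 1)) = _
  simp [Matrix.reindex_apply, finSumFinEquiv_symm_apply_castAdd,
    finSumFinEquiv_symm_apply_natAdd]

lemma gh_lc {k : ℕ} (g : Fin k → Fin k → ℝ) (i : Fin k) :
    gh g (Fin.last k) (Fin.castSucc i) = 0 := by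
  rw [last_eq_natAdd]
  show Matrix.reindex _ _ _ (Fin.natAdd k (0 : Fin 1)) (Fin.castAdd 1 i) = _
  simp [Matrix.reindex_apply, finSumFinEquiv_symm_apply_castAdd,
    finSumFinEquiv_symm_apply_natAdd]

lemma gh_ll {k : ℕ} (g : Fin k → Fin k → ℝ) :
    gh g (Fin.last k) (Fin.last k) = 1 := by
  rw [last_eq_natAdd]
  show Matrix.reindex _ _ _ (Fin.natAdd k (0 : Fin 1)) (Fin.natAdd k (0 : Fin 1)) = _
  simp [Matrix.reindex_apply, finSumFinEquiv_symm_apply_natAdd, Matrix.one_apply]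

lemma mmul_gh {n k : ℕ} (p : Fin n → Fin k → ℝ) (c : Fin n → ℝ) (g : Fin k → Fin k → ℝ) :
    mmul (fun B => Fin.snoc (p B) (c B)) (gh g) = fun B => Fin.snoc ((mmul p g) B) (c B) := by
  funext B K'
  induction K' using Fin.lastCases with
  | last =>
    simp only [mmul]
    rw [Fin.sum_univ_castSucc]
    simp [gh_cl, gh_ll, Fin.snoc_castSucc, Fin.snoc_last]
  | cast i =>
    simp only [mmul]
    rw [Fin.sum_univ_castSucc]
    simp [gh_cc, gh_lc, Fin.snoc_castSucc, Fin.snoc_last, mmul]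

end S18
namespace S18

open Filter Topology Set

lemma one_le_itop : (1 : WithTop ℕ∞) ≤ ((⊤ : ℕ∞) : WithTop ℕ∞) := by
  exact_mod_cast le_top

lemma add_one_le_itop : ((⊤ : ℕ∞) : WithTop ℕ∞) + 1 ≤ ((⊤ : ℕ∞) : WithTop ℕ∞) := by
  exact_mod_cast le_top

section L

variable {n k : ℕ} {U : Set (Fin n → ℝ)}
  {L : (Fin n → ℝ) → (Fin n → Fin (k + 1) → ℝ) → ℝ}
  {x : Fin n → ℝ}

lemma contDiffAt_L (hU : IsOpen U) (hL : IsDualForm U L) (hx : x ∈ U)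
    (M : Fin n → Fin (k + 1) → ℝ) :
    ContDiffAt ℝ ((⊤ : ℕ∞)) (fun q : (Fin n → ℝ) × (Fin n → Fin (k + 1) → ℝ) => L q.1 q.2)
      (x, M) :=
  hL.1.contDiffAt ((hU.prod isOpen_univ).mem_nhds (Set.mem_prod.mpr ⟨hx, trivial⟩))

lemma contDiff_updC_in (m : Fin n → Fin (k+1) → ℝ) (K : Fin (k+1)) :
    ContDiff ℝ ((⊤ : ℕ∞)) (fun c : Fin n → ℝ => updC m K c) := by
  apply contDiff_pi.2
  intro B
  apply contDiff_pi.2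
  intro J
  simp only [updC, Function.update_apply]
  by_cases h : J = K
  · simp only [h, if_pos rfl]
    exact contDiff_pi.1 contDiff_id B
  · simp only [if_neg h]
    exact contDiff_const

lemma differentiable_col (hU : IsOpen U) (hL : IsDualForm U L) (hx : x ∈ U)
    (m : Fin n → Fin (k+1) → ℝ) (K : Fin (k+1)) :
    Differentiable ℝ (fun c : Fin n → ℝ => L x (updC m K c)) := by
  intro c₀
  have hin : ContDiff ℝ ((⊤ : ℕ∞))
      (fun c : Fin n → ℝ => ((x, updC m K c) : (Fin n → ℝ) × (Fin n → Fin (k+1) → ℝ))) :=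
    contDiff_const.prodMk (contDiff_updC_in m K)
  exact ((contDiffAt_L hU hL hx (updC m K c₀)).comp c₀ hin.contDiffAt).differentiableAt
    (by simp)

lemma homog_col (hU : IsOpen U) (hL : IsDualForm U L) (hx : x ∈ U)
    (m : Fin n → Fin (k+1) → ℝ) (K : Fin (k+1)) (s : ℝ) (c : Fin n → ℝ) :
    L x (updC m K (s • c)) = s * L x (updC m K c) := by
  have key : ∀ s : ℝ, s ≠ 0 → L x (updC m K (s • c)) = s * L x (updC m K c) := by
    intro s hs
    have hcov := hL.2.1 x hx (updC m K c) (dg K s) (by rw [fdet_dg]; exact hs)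
    rw [mmul_dg] at hcov
    rw [hcov, fdet_dg]
  have c1 : Continuous (fun s : ℝ => L x (updC m K (s • c))) := by
    have := (differentiable_col hU hL hx m K).continuous
    exact this.comp (continuous_id.smul continuous_const)
  have c2 : Continuous (fun s : ℝ => s * L x (updC m K c)) :=
    continuous_id.mul continuous_const
  have := Continuous.ext_on (dense_compl_singleton (0:ℝ)) c1 c2
    (fun s hs => key s (Set.mem_compl_singleton_iff.mp hs))
  exact congrFun this s

lemma col_affine (hU : IsOpen U) (hL : IsDualForm U L) (hx : x ∈ U)
    (m : Fin n → Fin (k+1) → ℝ) (K : Fin (k+1)) (a b : Fin n → ℝ) (t : ℝ) :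
    L x (updC m K (a + t • b)) = L x (updC m K a) + t * L x (updC m K b) := by
  set f : (Fin n → ℝ) → ℝ := fun c => L x (updC m K c) with hf
  have hlin : ∀ c, f c = fderiv ℝ f 0 c :=
    linear_of_homog ((differentiable_col hU hL hx m K) 0) (homog_col hU hL hx m K)
  calc f (a + t • b) = fderiv ℝ f 0 (a + t • b) := hlin _
    _ = fderiv ℝ f 0 a + t • fderiv ℝ f 0 b := by
          rw [map_add, (fderiv ℝ f 0).map_smul]
    _ = f a + t * f b := by rw [← hlin a, ← hlin b]; simp

lemma updC_self {n k : ℕ} (m : Fin n → Fin k → ℝ) (K : Fin k) :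
    updC m K (fun B => m B K) = m :=
  funext fun B => Function.update_eq_self K (m B)

lemma pdM_eq (hU : IsOpen U) (hL : IsDualForm U L) (hx : x ∈ U)
    (A : Fin n) (K : Fin (k+1)) (m : Fin n → Fin (k+1) → ℝ) :
    pdM (L x) A K m = L x (updC m K (eV A)) := by
  rw [pdM_path]
  have h : ∀ t : ℝ, L x (updC m K ((fun B => m B K) + t • eV A))
      = L x m + t * L x (updC m K (eV A)) := by
    intro t
    rw [col_affine hU hL hx m K _ _ t, updC_self]
  simp only [h]
  exact deriv_affine _ _

lemma swap_antisym (hU : IsOpen U) (hL : IsDualForm U L) (hx : x ∈ U)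
    {K K' : Fin (k+1)} (h : K ≠ K') (m : Fin n → Fin (k+1) → ℝ) (a b : Fin n → ℝ) :
    L x (updC (updC m K a) K' b) = - L x (updC (updC m K b) K' a) := by
  have hcov := hL.2.1 x hx (updC (updC m K b) K' a) (sw K K')
    (by rw [fdet_sw h]; norm_num)
  rw [mmul_sw] at hcov
  have he : (fun B J' => updC (updC m K b) K' a B (Equiv.swap K K' J'))
      = updC (updC m K a) K' b := by
    funext B J'
    simp only [updC, Function.update_apply]
    by_cases h1 : J' = K'
    · rw [h1, Equiv.swap_apply_right]
      simp [h]
    · by_cases h2 : J' = K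
      · rw [h2, Equiv.swap_apply_left]
        simp [h, h1]
      · rw [Equiv.swap_apply_of_ne_of_ne h2 h1]
        simp [h1, h2]
  rw [he] at hcov
  rw [hcov, fdet_sw h]
  ring

end L

end S18
namespace S18

open Filter Topology Set

section L

variable {n k : ℕ} {U : Set (Fin n → ℝ)}
  {L : (Fin n → ℝ) → (Fin n → Fin (k + 1) → ℝ) → ℝ}
  {x : Fin n → ℝ}

lemma updC_snoc (A : Fin n) (p : Fin n → Fin k → ℝ) (c : Fin n → ℝ) :
    updC (fun B => Fin.snoc (p B) (c B)) (Fin.last k) (eV A) = sE A p := by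
  funext B
  show Function.update (Fin.snoc (p B) (c B) : Fin (k+1) → ℝ) (Fin.last k) (eV A B)
      = (Fin.snoc (p B) (eV A B) : Fin (k+1) → ℝ)
  exact Fin.update_snoc_last (α := fun _ : Fin (k+1) => ℝ) (c B) (p B) (eV A B)

lemma pdM_snoc (hU : IsOpen U) (hL : IsDualForm U L) (hx : x ∈ U)
    (A : Fin n) (p : Fin n → Fin k → ℝ) (c : Fin n → ℝ) :
    pdM (L x) A (Fin.last k) (fun B => Fin.snoc (p B) (c B)) = L x (sE A p) := by
  rw [pdM_eq hU hL hx, updC_snoc]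

lemma pdM_snoc0 (hU : IsOpen U) (hL : IsDualForm U L) (hx : x ∈ U)
    (A : Fin n) (p : Fin n → Fin k → ℝ) :
    pdM (L x) A (Fin.last k) (fun B => Fin.snoc (p B) (0:ℝ)) = L x (sE A p) :=
  pdM_snoc hU hL hx A p (fun _ => (0:ℝ))

lemma dbar_summand (hU : IsOpen U) (hL : IsDualForm U L) (hx : x ∈ U)
    (A : Fin n) (p : Fin n → Fin k → ℝ) :
    pdV (fun x' => pdM (L x') A (Fin.last k) (fun B => Fin.snoc (p B) (0:ℝ))) A x
      = pdV (fun x' => L x' (sE A p)) A x :=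
  pdV_congrU hU hx (fun x' hx' => pdM_snoc0 hU hL hx' A p) A

lemma dbar_eqU (hU : IsOpen U) (hL : IsDualForm U L) (hx : x ∈ U)
    (p : Fin n → Fin k → ℝ) :
    dbar k L x p = (-1 : ℝ) ^ k * ∑ A, pdV (fun x' => L x' (sE A p)) A x := by
  unfold dbar
  congr 1
  exact Finset.sum_congr rfl (fun A _ => dbar_summand hU hL hx A p)

lemma diff_line (hU : IsOpen U) (hL : IsDualForm U L) (hx : x ∈ U)
    (M : Fin n → Fin (k + 1) → ℝ) (A : Fin n) :
    DifferentiableAt ℝ (fun s : ℝ => L (x + s • eV A) M) 0 := by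
  have h1 := contDiffAt_L hU hL hx M
  have h2 : ContDiff ℝ ((⊤ : ℕ∞))
      (fun s : ℝ => ((x + s • eV A, M) : (Fin n → ℝ) × (Fin n → Fin (k+1) → ℝ))) :=
    ((contDiff_const.add (contDiff_id.smul contDiff_const))).prodMk contDiff_const
  have h3 : (x + (0:ℝ) • eV A, M) = ((x, M) : (Fin n → ℝ) × (Fin n → Fin (k+1) → ℝ)) := by
    rw [line_zero]
  rw [← h3] at h1
  exact (h1.comp 0 h2.contDiffAt).differentiableAt (by simp)

lemma pdV_linc {u v : (Fin n → ℝ) → ℝ} {A : Fin n}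
    (hu : DifferentiableAt ℝ (fun s : ℝ => u (x + s • eV A)) 0)
    (hv : DifferentiableAt ℝ (fun s : ℝ => v (x + s • eV A)) 0) (t : ℝ) :
    pdV (fun x' => u x' + t * v x') A x = pdV u A x + t * pdV v A x := by
  rw [pdV_eq, pdV_eq, pdV_eq]
  rw [deriv_fun_add hu (hv.const_mul t), deriv_const_mul_field]

lemma pdV_L_affine (hU : IsOpen U) (hL : IsDualForm U L) (hx : x ∈ U)
    (A : Fin n) (M : Fin n → Fin (k + 1) → ℝ) (Kc : Fin (k + 1)) (b : Fin n → ℝ) (t : ℝ) :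
    pdV (fun x' => L x' (updC M Kc ((fun B' => M B' Kc) + t • b))) A x
      = pdV (fun x' => L x' M) A x + t * pdV (fun x' => L x' (updC M Kc b)) A x := by
  have he : Set.EqOn (fun x' => L x' (updC M Kc ((fun B' => M B' Kc) + t • b)))
      (fun x' => L x' M + t * L x' (updC M Kc b)) U := by
    intro x' hx'
    show L x' _ = _
    rw [col_affine hU hL hx' M Kc _ b t, updC_self]
  rw [pdV_congrU hU hx he A]
  exact pdV_linc (diff_line hU hL hx M A) (diff_line hU hL hx (updC M Kc b) A) t

lemma sE_updC (A : Fin n) (p : Fin n → Fin k → ℝ) (K : Fin k) (c : Fin n → ℝ) :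
    sE A (updC p K c) = updC (sE A p) K.castSucc c := by
  funext B
  show (Fin.snoc (Function.update (p B) K (c B)) (eV A B) : Fin (k+1) → ℝ)
      = Function.update (Fin.snoc (p B) (eV A B) : Fin (k+1) → ℝ) K.castSucc (c B)
  exact Fin.snoc_update (α := fun _ : Fin (k+1) => ℝ) (eV A B) (p B) K (c B)

lemma sE_col (A : Fin n) (p : Fin n → Fin k → ℝ) (K : Fin k) :
    (fun B' => sE A p B' K.castSucc) = fun B' => p B' K := by
  funext B'
  simp [sE, Fin.snoc_castSucc]

lemma pdM_dbar (hU : IsOpen U) (hL : IsDualForm U L) (hx : x ∈ U)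
    (B : Fin n) (K : Fin k) (p : Fin n → Fin k → ℝ) :
    pdM (dbar k L x) B K p
      = (-1 : ℝ) ^ k * ∑ A, pdV (fun x' => L x' (updC (sE A p) K.castSucc (eV B))) A x := by
  rw [pdM_path]
  have ht : ∀ t : ℝ, dbar k L x (updC p K ((fun B' => p B' K) + t • eV B))
      = dbar k L x p
        + t * ((-1 : ℝ) ^ k
            * ∑ A, pdV (fun x' => L x' (updC (sE A p) K.castSucc (eV B))) A x) := by
    intro t
    rw [dbar_eqU hU hL hx, dbar_eqU hU hL hx]
    have hA : ∀ A : Fin n,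
        pdV (fun x' => L x' (sE A (updC p K ((fun B' => p B' K) + t • eV B)))) A x
          = pdV (fun x' => L x' (sE A p)) A x
            + t * pdV (fun x' => L x' (updC (sE A p) K.castSucc (eV B))) A x := by
      intro A
      have hrw : sE A (updC p K ((fun B' => p B' K) + t • eV B))
          = updC (sE A p) K.castSucc ((fun B' => sE A p B' K.castSucc) + t • eV B) := by
        rw [sE_updC, sE_col]
      rw [hrw, pdV_L_affine hU hL hx]
    rw [Finset.sum_congr rfl (fun A _ => hA A), Finset.sum_add_distrib]
    rw [← Finset.mul_sum]
    ring
  simp only [ht]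
  exact deriv_affine _ _

end L

end S18
namespace S18

open Filter Topology Set

lemma updC_comm {n k : ℕ} {K₁ K₂ : Fin k} (h : K₁ ≠ K₂) (M : Fin n → Fin k → ℝ)
    (a b : Fin n → ℝ) : updC (updC M K₁ a) K₂ b = updC (updC M K₂ b) K₁ a := by
  funext B
  show Function.update (Function.update (M B) K₁ (a B)) K₂ (b B)
      = Function.update (Function.update (M B) K₂ (b B)) K₁ (a B)
  exact Function.update_comm h _ _ _

lemma updC_idem {n k : ℕ} (M : Fin n → Fin k → ℝ) (K : Fin k) (a b : Fin n → ℝ) :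
    updC (updC M K a) K b = updC M K b := by
  funext B
  show Function.update (Function.update (M B) K (a B)) K (b B)
      = Function.update (M B) K (b B)
  exact Function.update_idem _ _ _

section L

variable {n k : ℕ} {U : Set (Fin n → ℝ)}
  {L : (Fin n → ℝ) → (Fin n → Fin (k + 1) → ℝ) → ℝ}
  {x : Fin n → ℝ}

lemma pdM2_dbar (hU : IsOpen U) (hL : IsDualForm U L) (hx : x ∈ U)
    {K₁ K₂ : Fin k} (hK : K₁ ≠ K₂) (B C : Fin n) (p : Fin n → Fin k → ℝ) :
    pdM (fun p' => pdM (dbar k L x) C K₂ p') B K₁ p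
      = (-1 : ℝ) ^ k * ∑ A, pdV (fun x' =>
          L x' (updC (updC (sE A p) K₂.castSucc (eV C)) K₁.castSucc (eV B))) A x := by
  have hKc : K₁.castSucc ≠ K₂.castSucc := fun hc => hK (Fin.castSucc_injective _ hc)
  rw [pdM_path]
  have ht : ∀ t : ℝ, pdM (dbar k L x) C K₂ (updC p K₁ ((fun B' => p B' K₁) + t • eV B))
      = pdM (dbar k L x) C K₂ p
        + t * ((-1 : ℝ) ^ k * ∑ A, pdV (fun x' =>
            L x' (updC (updC (sE A p) K₂.castSucc (eV C)) K₁.castSucc (eV B))) A x) := by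
    intro t
    rw [pdM_dbar hU hL hx C K₂, pdM_dbar hU hL hx C K₂]
    have hA : ∀ A : Fin n,
        pdV (fun x' => L x' (updC (sE A (updC p K₁ ((fun B' => p B' K₁) + t • eV B)))
            K₂.castSucc (eV C))) A x
          = pdV (fun x' => L x' (updC (sE A p) K₂.castSucc (eV C))) A x
            + t * pdV (fun x' =>
                L x' (updC (updC (sE A p) K₂.castSucc (eV C)) K₁.castSucc (eV B))) A x := by
      intro A
      have hrw : updC (sE A (updC p K₁ ((fun B' => p B' K₁) + t • eV B))) K₂.castSucc (eV C)
          = updC (updC (sE A p) K₂.castSucc (eV C)) K₁.castSucc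
              ((fun B' => updC (sE A p) K₂.castSucc (eV C) B' K₁.castSucc) + t • eV B) := by
        rw [sE_updC, updC_comm hKc]
        congr 1
        funext B'
        simp [updC, Function.update_apply, hKc, sE, Fin.snoc_castSucc]
      rw [hrw, pdV_L_affine hU hL hx]
    rw [Finset.sum_congr rfl (fun A _ => hA A), Finset.sum_add_distrib, ← Finset.mul_sum]
    ring
  simp only [ht]
  exact deriv_affine _ _

lemma pdM2_dbar_same (hU : IsOpen U) (hL : IsDualForm U L) (hx : x ∈ U)
    (K : Fin k) (B C : Fin n) (p : Fin n → Fin k → ℝ) :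
    pdM (fun p' => pdM (dbar k L x) C K p') B K p = 0 := by
  rw [pdM_path]
  have ht : ∀ t : ℝ, pdM (dbar k L x) C K (updC p K ((fun B' => p B' K) + t • eV B))
      = pdM (dbar k L x) C K p := by
    intro t
    rw [pdM_dbar hU hL hx C K, pdM_dbar hU hL hx C K]
    congr 1
    apply Finset.sum_congr rfl
    intro A _
    rw [sE_updC, updC_idem]
  simp only [ht]
  exact deriv_const 0 _

lemma fundeqs_dbar (hU : IsOpen U) (hL : IsDualForm U L) (hx : x ∈ U) :
    FundEqs (dbar k L x) := by
  intro i₁ i₂ j₁ j₂ m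
  by_cases hj : j₁ = j₂
  · subst hj
    rw [pdM2_dbar_same hU hL hx, pdM2_dbar_same hU hL hx]
    ring
  · rw [pdM2_dbar hU hL hx hj, pdM2_dbar hU hL hx hj, ← mul_add,
      ← Finset.sum_add_distrib]
    apply mul_eq_zero_of_right
    apply Finset.sum_eq_zero
    intro A _
    have hKc : j₂.castSucc ≠ j₁.castSucc :=
      fun hc => hj (Fin.castSucc_injective _ hc).symm
    have h1 : Set.EqOn
        (fun x' => L x' (updC (updC (sE A m) j₂.castSucc (eV i₂)) j₁.castSucc (eV i₁)))
        (fun x' => -(L x' (updC (updC (sE A m) j₂.castSucc (eV i₁)) j₁.castSucc (eV i₂)))) U :=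
      fun x' hx' => swap_antisym hU hL hx' hKc (sE A m) (eV i₂) (eV i₁)
    rw [pdV_congrU hU hx h1 A, pdV_neg]
    ring

lemma cov_dbar (hU : IsOpen U) (hL : IsDualForm U L) (hx : x ∈ U)
    (p : Fin n → Fin k → ℝ) (g : Fin k → Fin k → ℝ) (hg : fdet g ≠ 0) :
    dbar k L x (mmul p g) = fdet g * dbar k L x p := by
  rw [dbar_eqU hU hL hx, dbar_eqU hU hL hx]
  have hA : ∀ A : Fin n, pdV (fun x' => L x' (sE A (mmul p g))) A x
      = fdet g * pdV (fun x' => L x' (sE A p)) A x := by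
    intro A
    have h1 : Set.EqOn (fun x' => L x' (sE A (mmul p g)))
        (fun x' => fdet g * L x' (sE A p)) U := by
      intro x' hx'
      show L x' (sE A (mmul p g)) = _
      rw [show sE A (mmul p g) = mmul (sE A p) (gh g) from (mmul_gh p (eV A) g).symm]
      rw [hL.2.1 x' hx' (sE A p) (gh g) (by rw [fdet_gh]; exact hg), fdet_gh]
    rw [pdV_congrU hU hx h1 A, pdV_const_mul]
  rw [Finset.sum_congr rfl (fun A _ => hA A), ← Finset.mul_sum]
  ring

end L

end S18
namespace S18

open Filter Topology Set

section L

variable {n k : ℕ} {U : Set (Fin n → ℝ)}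
  {L : (Fin n → ℝ) → (Fin n → Fin (k + 1) → ℝ) → ℝ}
  {x : Fin n → ℝ}

lemma contDiffOn_LM (hL : IsDualForm U L) (M : Fin n → Fin (k + 1) → ℝ) :
    ContDiffOn ℝ ((⊤ : ℕ∞)) (fun x' => L x' M) U := by
  have hin : ContDiff ℝ ((⊤ : ℕ∞))
      (fun x' : Fin n → ℝ => ((x', M) : (Fin n → ℝ) × (Fin n → Fin (k+1) → ℝ))) :=
    contDiff_id.prodMk contDiff_const
  exact hL.1.comp hin.contDiffOn (fun x' hx' => ⟨hx', trivial⟩)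

lemma smooth_dbar (hU : IsOpen U) (hL : IsDualForm U L) :
    ContDiffOn ℝ ((⊤ : ℕ∞))
      (fun q : (Fin n → ℝ) × (Fin n → Fin k → ℝ) => dbar k L q.1 q.2)
      (U ×ˢ (Set.univ : Set (Fin n → Fin k → ℝ))) := by
  have hopen : IsOpen (U ×ˢ (Set.univ : Set (Fin n → Fin k → ℝ))) := hU.prod isOpen_univ
  have hinner : ∀ A : Fin n, ContDiff ℝ ((⊤ : ℕ∞))
      (fun q : (Fin n → ℝ) × (Fin n → Fin k → ℝ) =>
        ((q.1, sE A q.2) : (Fin n → ℝ) × (Fin n → Fin (k+1) → ℝ))) := by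
    intro A
    refine contDiff_fst.prodMk (contDiff_pi.2 fun B => contDiff_pi.2 fun J => ?_)
    induction J using Fin.lastCases with
    | last =>
      simp only [sE, Fin.snoc_last]
      exact contDiff_const
    | cast j =>
      simp only [sE, Fin.snoc_castSucc]
      exact contDiff_pi.1 (contDiff_pi.1 contDiff_snd B) j
  have hΨ : ∀ A : Fin n, ContDiffOn ℝ ((⊤ : ℕ∞))
      (fun q : (Fin n → ℝ) × (Fin n → Fin k → ℝ) => L q.1 (sE A q.2))
      (U ×ˢ (Set.univ : Set (Fin n → Fin k → ℝ))) := fun A =>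
    hL.1.comp (hinner A).contDiffOn (fun q hq => ⟨hq.1, trivial⟩)
  have hd : ∀ A : Fin n, ContDiffOn ℝ ((⊤ : ℕ∞))
      (fderiv ℝ (fun q : (Fin n → ℝ) × (Fin n → Fin k → ℝ) => L q.1 (sE A q.2)))
      (U ×ˢ (Set.univ : Set (Fin n → Fin k → ℝ))) := fun A =>
    (hΨ A).fderiv_of_isOpen hopen add_one_le_itop
  have hG : ContDiffOn ℝ ((⊤ : ℕ∞))
      (fun q : (Fin n → ℝ) × (Fin n → Fin k → ℝ) => (-1 : ℝ) ^ k *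
        ∑ A, fderiv ℝ (fun q' : (Fin n → ℝ) × (Fin n → Fin k → ℝ) => L q'.1 (sE A q'.2)) q
          ((eV A, 0) : (Fin n → ℝ) × (Fin n → Fin k → ℝ)))
      (U ×ˢ (Set.univ : Set (Fin n → Fin k → ℝ))) :=
    contDiffOn_const.mul (ContDiffOn.sum fun A _ => (hd A).clm_apply contDiffOn_const)
  apply hG.congr
  rintro ⟨x, p⟩ ⟨hx, -⟩
  rw [dbar_eqU hU hL hx p]
  congr 1
  apply Finset.sum_congr rfl
  intro A _
  have hdiffq : DifferentiableAt ℝ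
      (fun q : (Fin n → ℝ) × (Fin n → Fin k → ℝ) => L q.1 (sE A q.2)) (x, p) :=
    ((hΨ A).contDiffAt (hopen.mem_nhds ⟨hx, trivial⟩)).differentiableAt (by simp)
  have hpath : HasDerivAt (fun t : ℝ => ((x + t • eV A, p) : (Fin n → ℝ) × (Fin n → Fin k → ℝ)))
      ((eV A, 0)) 0 := (hasDerivAt_line x (eV A) 0).prodMk (hasDerivAt_const 0 p)
  have h0 : HasFDerivAt (fun q : (Fin n → ℝ) × (Fin n → Fin k → ℝ) => L q.1 (sE A q.2))
      (fderiv ℝ (fun q : (Fin n → ℝ) × (Fin n → Fin k → ℝ) => L q.1 (sE A q.2)) (x, p))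
      ((x + (0:ℝ) • eV A, p)) := by
    rw [line_zero]
    exact hdiffq.hasFDerivAt
  rw [pdV_eq]
  exact (h0.comp_hasDerivAt 0 hpath).deriv

lemma pdV_eq_fderiv {n : ℕ} {f : (Fin n → ℝ) → ℝ} {y : Fin n → ℝ}
    (hf : DifferentiableAt ℝ f y) (A : Fin n) :
    pdV f A y = fderiv ℝ f y (eV A) := by
  rw [pdV_eq]
  have h0 : HasFDerivAt f (fderiv ℝ f y) (y + (0:ℝ) • eV A) := by
    rw [line_zero]; exact hf.hasFDerivAt
  exact (h0.comp_hasDerivAt 0 (hasDerivAt_line y (eV A) 0)).deriv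

lemma fderiv_comm {n : ℕ} {U : Set (Fin n → ℝ)} {f : (Fin n → ℝ) → ℝ} {x : Fin n → ℝ}
    (hU : IsOpen U) (hf : ContDiffOn ℝ ((⊤ : ℕ∞)) f U) (hx : x ∈ U) (A B : Fin n) :
    pdV (fun x' => fderiv ℝ f x' (eV A)) B x
      = pdV (fun x' => fderiv ℝ f x' (eV B)) A x := by
  have h1 : ∀ᶠ y in 𝓝 x, HasFDerivAt f (fderiv ℝ f y) y := by
    filter_upwards [hU.mem_nhds hx] with y hy
    exact ((hf.contDiffAt (hU.mem_nhds hy)).differentiableAt (by simp)).hasFDerivAt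
  have h2 : HasFDerivAt (fderiv ℝ f) (fderiv ℝ (fderiv ℝ f) x) x := by
    have hh := (hf.contDiffAt (hU.mem_nhds hx)).fderiv_right (m := 1)
      (by exact WithTop.coe_le_coe.2 le_top)
    exact (hh.differentiableAt one_ne_zero).hasFDerivAt
  have hsym := second_derivative_symmetric_of_eventually h1 h2 (eV A) (eV B)
  have hside : ∀ A' B' : Fin n,
      pdV (fun x' => fderiv ℝ f x' (eV A')) B' x
        = fderiv ℝ (fderiv ℝ f) x (eV B') (eV A') := by
    intro A' B'
    rw [pdV_eq]
    have h0 : HasFDerivAt (fderiv ℝ f) (fderiv ℝ (fderiv ℝ f) x) (x + (0:ℝ) • eV B') := by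
      rw [line_zero]; exact h2
    have hl : HasDerivAt (fun t : ℝ => fderiv ℝ f (x + t • eV B'))
        (fderiv ℝ (fderiv ℝ f) x (eV B')) 0 :=
      h0.comp_hasDerivAt 0 (hasDerivAt_line x (eV B') 0)
    exact (((ContinuousLinearMap.apply ℝ ℝ (eV A')).hasFDerivAt).comp_hasDerivAt 0 hl).deriv
  rw [hside A B, hside B A]
  exact hsym.symm

end L

end S18
namespace S18

open Filter Topology Set

lemma pdV_sum {n : ℕ} {ι : Type*} (s : Finset ι) (F : ι → (Fin n → ℝ) → ℝ)
    {A : Fin n} {x : Fin n → ℝ}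
    (h : ∀ i ∈ s, DifferentiableAt ℝ (fun t : ℝ => F i (x + t • eV A)) 0) :
    pdV (fun x' => ∑ i ∈ s, F i x') A x = ∑ i ∈ s, pdV (F i) A x := by
  simp only [pdV_eq]
  exact deriv_fun_sum h

lemma diff_line2 {n : ℕ} {U : Set (Fin n → ℝ)} {f : (Fin n → ℝ) → ℝ} {x : Fin n → ℝ}
    (hU : IsOpen U) (hf : ContDiffOn ℝ ((⊤ : ℕ∞)) f U) (hx : x ∈ U) (A B : Fin n) :
    DifferentiableAt ℝ (fun t : ℝ => fderiv ℝ f (x + t • eV B) (eV A)) 0 := by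
  have hd := hf.fderiv_of_isOpen hU add_one_le_itop
  have hc : ContDiffAt ℝ ((⊤ : ℕ∞)) (fderiv ℝ f) (x + (0:ℝ) • eV B) := by
    rw [line_zero]
    exact hd.contDiffAt (hU.mem_nhds hx)
  have hline : ContDiff ℝ ((⊤ : ℕ∞)) (fun t : ℝ => x + t • eV B) :=
    contDiff_const.add (contDiff_id.smul contDiff_const)
  exact ((hc.comp (0:ℝ) hline.contDiffAt).clm_apply contDiffAt_const).differentiableAt
    (by simp)

section DD

variable {n m : ℕ} {U : Set (Fin n → ℝ)}
  {L : (Fin n → ℝ) → (Fin n → Fin (m + 1 + 1) → ℝ) → ℝ}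
  {x : Fin n → ℝ}

lemma dd_zero (hU : IsOpen U) (hL : IsDualForm U L) (hx : x ∈ U)
    (q : Fin n → Fin m → ℝ) :
    dbar m (fun x' (P : Fin n → Fin (m + 1) → ℝ) => dbar (m + 1) L x' P) x q = 0 := by
  set S0 : Fin n → Fin (m + 1 + 1) → ℝ :=
    fun B' => (Fin.snoc (Fin.snoc (q B') (0:ℝ)) (0:ℝ) : Fin (m + 1 + 1) → ℝ) with hS0
  set RW : Fin n → Fin n → (Fin n → Fin (m + 1 + 1) → ℝ) :=
    fun A B => updC (updC S0 (Fin.castSucc (Fin.last m)) (eV B)) (Fin.last (m + 1)) (eV A)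
    with hRW
  have hne : Fin.castSucc (Fin.last m) ≠ Fin.last (m + 1) :=
    (Fin.castSucc_lt_last (Fin.last m)).ne
  have hS : ∀ A : Fin n,
      sE A (fun B' => Fin.snoc (q B') (0:ℝ)) = updC S0 (Fin.last (m + 1)) (eV A) := by
    intro A
    funext B'
    show (Fin.snoc (Fin.snoc (q B') (0:ℝ)) (eV A B') : Fin (m+1+1) → ℝ)
        = Function.update (S0 B') (Fin.last (m+1)) (eV A B')
    exact (Fin.update_snoc_last (α := fun _ : Fin (m+1+1) => ℝ)
      (0:ℝ) (Fin.snoc (q B') (0:ℝ)) (eV A B')).symm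
  have key1 : ∀ A B : Fin n,
      updC (sE A (fun B' => Fin.snoc (q B') (0:ℝ))) (Fin.castSucc (Fin.last m)) (eV B)
        = RW A B := by
    intro A B
    rw [hS A, updC_comm (Ne.symm hne)]
  -- the double derivative terms
  set T : Fin n → Fin n → ℝ :=
    fun A B => pdV (fun x' => fderiv ℝ (fun x'' => L x'' (RW A B)) x' (eV A)) B x with hT
  have hstep : ∀ B : Fin n,
      pdV (fun x' => pdM (dbar (m + 1) L x') B (Fin.last m)
          (fun B' => Fin.snoc (q B') (0:ℝ))) B x
        = (-1 : ℝ) ^ (m + 1) * ∑ A, T A B := by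
    intro B
    have hcg : Set.EqOn
        (fun x' => pdM (dbar (m + 1) L x') B (Fin.last m) (fun B' => Fin.snoc (q B') (0:ℝ)))
        (fun x' => (-1 : ℝ) ^ (m + 1) *
          ∑ A, fderiv ℝ (fun x'' => L x'' (RW A B)) x' (eV A)) U := by
      intro x' hx'
      show pdM (dbar (m + 1) L x') B (Fin.last m) _ = _
      rw [pdM_dbar hU hL hx' B (Fin.last m)]
      congr 1
      apply Finset.sum_congr rfl
      intro A _
      rw [key1 A B]
      exact pdV_eq_fderiv (((contDiffOn_LM hL (RW A B)).contDiffAt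
        (hU.mem_nhds hx')).differentiableAt (by simp)) A
    rw [pdV_congrU hU hx hcg B, pdV_const_mul]
    congr 1
    exact pdV_sum Finset.univ _ (fun A _ =>
      diff_line2 hU (contDiffOn_LM hL (RW A B)) hx A B)
  have hanti : ∀ A B : Fin n, T A B = - T B A := by
    intro A B
    have hEq : Set.EqOn (fun x'' => L x'' (RW A B)) (fun x'' => -(L x'' (RW B A))) U :=
      fun x'' hx'' => swap_antisym hU hL hx'' hne S0 (eV B) (eV A)
    have hfd : Set.EqOn (fun x' => fderiv ℝ (fun x'' => L x'' (RW A B)) x' (eV A))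
        (fun x' => -(fderiv ℝ (fun x'' => L x'' (RW B A)) x' (eV A))) U := by
      intro x' hx'
      have hev : (fun x'' => L x'' (RW A B)) =ᶠ[𝓝 x'] (fun x'' => -(L x'' (RW B A))) := by
        filter_upwards [hU.mem_nhds hx'] with y hy
        exact hEq hy
      show fderiv ℝ (fun x'' => L x'' (RW A B)) x' (eV A) = _
      rw [hev.fderiv_eq, fderiv_fun_neg]
      simp
    have h1 : T A B = -(pdV (fun x' => fderiv ℝ (fun x'' => L x'' (RW B A)) x' (eV A)) B x) := by
      rw [hT]
      show pdV _ B x = _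
      rw [pdV_congrU hU hx hfd B, pdV_neg]
    rw [h1, fderiv_comm hU (contDiffOn_LM hL (RW B A)) hx A B]
  have hzero : (∑ B, ∑ A, T A B) = 0 := by
    have h2 : (∑ B, ∑ A, T A B) = - (∑ B, ∑ A, T A B) := by
      calc (∑ B, ∑ A, T A B) = ∑ B, ∑ A, -(T B A) := by
            apply Finset.sum_congr rfl; intro B _
            apply Finset.sum_congr rfl; intro A _
            exact hanti A B
        _ = - ∑ B, ∑ A, T B A := by simp [Finset.sum_neg_distrib]
        _ = - ∑ B, ∑ A, T A B := by rw [Finset.sum_comm]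
    linarith
  show (-1 : ℝ) ^ m * ∑ B,
      pdV (fun x' => pdM (dbar (m + 1) L x') B (Fin.last m)
        (fun B' => Fin.snoc (q B') (0:ℝ))) B x = 0
  rw [Finset.sum_congr rfl (fun B _ => hstep B), ← Finset.mul_sum, hzero]
  ring

end DD

end S18

/-- For an even dual form `𝓛` of codegree `k+1` on `U`:
`∂𝓛/∂p_A^{k+1}` does not depend on the last column of `p`; hence `δ̄𝓛` is
well-defined (independent of the appended last column); `δ̄𝓛` is an even dual form
of codegree `k` on `U`; and, when `k ≥ 1`, `δ̄(δ̄𝓛) = 0`. -/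
theorem statement_18 (n k : ℕ) (U : Set (Fin n → ℝ)) (hU : IsOpen U)
    (L : (Fin n → ℝ) → (Fin n → Fin (k + 1) → ℝ) → ℝ) (hL : IsDualForm U L) :
    (∀ x ∈ U, ∀ (A : Fin n) (p : Fin n → Fin k → ℝ) (c c' : Fin n → ℝ),
        pdM (L x) A (Fin.last k) (fun B => Fin.snoc (p B) (c B))
          = pdM (L x) A (Fin.last k) (fun B => Fin.snoc (p B) (c' B))) ∧
    (∀ x ∈ U, ∀ (p : Fin n → Fin k → ℝ) (c : Fin n → ℝ),
        (-1 : ℝ) ^ k * ∑ A,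
            pdV (fun x' => pdM (L x') A (Fin.last k)
              (fun B => Fin.snoc (p B) (c B))) A x
          = dbar k L x p) ∧
    IsDualForm U (dbar k L) ∧
    (∀ (m : ℕ) (h : k = m + 1), ∀ x ∈ U, ∀ q : Fin n → Fin m → ℝ,
        dbar m (fun x' (P : Fin n → Fin (m + 1) → ℝ) =>
          dbar k L x' (fun A J => P A (Fin.cast h J))) x q = 0) := by

  refine ⟨?_, ?_, ⟨S18.smooth_dbar hU hL,
    fun x hx p g hg => S18.cov_dbar hU hL hx p g hg,
    fun x hx => S18.fundeqs_dbar hU hL hx⟩, ?_⟩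
  · intro x hx A p c c'
    rw [S18.pdM_snoc hU hL hx A p c, S18.pdM_snoc hU hL hx A p c']
  · intro x hx p c
    rw [S18.dbar_eqU hU hL hx p]
    congr 1
    apply Finset.sum_congr rfl
    intro A _
    exact S18.pdV_congrU hU hx (fun x' hx' => S18.pdM_snoc hU hL hx' A p c) A
  · intro m h x hx q
    subst h
    exact S18.dd_zero hU hL hx q
end
end

section
/- Let U ⊆ ℝⁿ be open, let 𝓛 be an even mixed form of codegree n and additional degree r on U, and let L(x, w) := 𝓛(x, I_n, w) be the corresponding even r-form. Then for all x ∈ U, w ∈ Matrix(r×n, ℝ) and w' ∈ ℝⁿ, Σ_{K=1}^{n} Σ_{A=1}^{n} w'^K (∂²𝓛/∂x^A∂p_A^K)(x, I_n, w) = Σ_{A=1}^{n} w'^A (∂L/∂x^A)(x, w) − Σ_{A=1}^{n} Σ_{F=1}^{r} Σ_{B=1}^{n} w'^A w_F^B (∂²L/∂x^B∂w_F^A)(x, w); that is, the differential of mixed forms corresponds, under the isomorphism 𝓛 ↦ L of mixed forms of codegree n with forms as Lagrangians of paths, to the differential ΔL(x, (w; w')) = (−1)^r Σ_A w'^A (∂L/∂x^A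 − Σ_{F,B} w_F^B ∂²L/∂x^B∂w_F^A) of the latter. -/
open MeasureTheory
open scoped BigOperators

noncomputable section

section Aux

lemma hasDerivAt_line {E : Type*} [NormedAddCommGroup E] [NormedSpace ℝ E]
    {f : E → ℝ} (z v : E) (hf : DifferentiableAt ℝ f z) :
    HasDerivAt (fun t : ℝ => f (z + t • v)) (fderiv ℝ f z v) 0 := by
  have hc : HasDerivAt (fun t : ℝ => z + t • v) v 0 := by
    simpa using ((hasDerivAt_id (0:ℝ)).smul_const v).const_add z
  have hf' : HasFDerivAt f (fderiv ℝ f z) (z + (0:ℝ) • v) := by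
    simpa using hf.hasFDerivAt
  exact hf'.comp_hasDerivAt (0:ℝ) hc

lemma deriv_line {E : Type*} [NormedAddCommGroup E] [NormedSpace ℝ E]
    {f : E → ℝ} (z v : E) (hf : DifferentiableAt ℝ f z) :
    deriv (fun t : ℝ => f (z + t • v)) 0 = fderiv ℝ f z v :=
  (hasDerivAt_line z v hf).deriv

lemma fdet_idm_add (n : ℕ) (A K : Fin n) (t : ℝ) :
    fdet (fun i j => idm n i j + (if i = A ∧ j = K then t else 0))
      = 1 + t * (if A = K then 1 else 0) := by
  by_cases h : A = K
  · subst h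
    have heq : Matrix.of (fun i j => idm n i j + (if i = A ∧ j = A then t else 0))
        = Matrix.diagonal (fun i => if i = A then 1 + t else 1) := by
      ext i j
      by_cases hij : i = j
      · subst hij
        by_cases hiA : i = A <;> simp [idm, Matrix.diagonal, hiA]
      · simp only [idm, Matrix.of_apply, if_neg hij]
        rw [if_neg (fun h12 => hij (h12.1.trans h12.2.symm))]
        simp [Matrix.diagonal_apply_ne _ hij]
    rw [fdet, heq, Matrix.det_diagonal]
    simp [Finset.prod_ite_eq']
  · have heq : Matrix.of (fun i j => idm n i j + (if i = A ∧ j = K then t else 0))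
        = Matrix.transvection A K t := by
      ext i j
      simp [idm, Matrix.transvection, Matrix.single_apply, Matrix.one_apply,
        and_comm, eq_comm]
    rw [fdet, heq, Matrix.det_transvection_of_ne A K h t]
    simp [h]

lemma mmul_idm_left {n k : ℕ} (M : Fin n → Fin k → ℝ) : mmul (idm n) M = M := by
  funext i j
  simp [mmul, idm, ite_mul, Finset.sum_ite_eq]

end Aux

/-- For an even mixed form `𝓛` of codegree `n` and additional
degree `r` on `U ⊆ ℝⁿ`, with corresponding even `r`-form `L(x, w) := 𝓛(x, I_n, w)`,
one has for all `x ∈ U`, `w`, `w'`: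
`Σ_{K,A} w'^K ∂²𝓛/∂x^A∂p_A^K (x, I_n, w) = Σ_A w'^A ∂L/∂x^A (x, w) −
Σ_{A,F,B} w'^A w_F^B ∂²L/∂x^B∂w_F^A (x, w)`; i.e. the differential of mixed forms
corresponds to the differential of forms as Lagrangians of paths. -/
theorem statement_19 (n r : ℕ) (U : Set (Fin n → ℝ)) (hU : IsOpen U)
    (L : (Fin n → ℝ) → (Fin n → Fin n → ℝ) → (Fin r → Fin n → ℝ) → ℝ)
    (hL : IsMixedForm U L) :
    ∀ x ∈ U, ∀ (w : Fin r → Fin n → ℝ) (w' : Fin n → ℝ),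
      ∑ K, ∑ A, w' K * pdV (fun x' => pdM (fun p' => L x' p' w) A K (idm n)) A x
        = ∑ A, w' A * pdV (fun x' => L x' (idm n) w) A x
          - ∑ A, ∑ F, ∑ B, w' A * w F B *
              pdV (fun x' => pdM (fun w2 => L x' (idm n) w2) F A w) B x := by

  obtain ⟨hsmooth, hrcov, hlcov, hadm, hfund⟩ := hL
  intro x hx w w'
  classical
  set f : (Fin n → ℝ) × (Fin n → Fin n → ℝ) × (Fin r → Fin n → ℝ) → ℝ :=
    fun q => L q.1 q.2.1 q.2.2 with hfdef
  have hOpen : IsOpen (U ×ˢ (Set.univ :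
      Set ((Fin n → Fin n → ℝ) × (Fin r → Fin n → ℝ)))) := hU.prod isOpen_univ
  have hfCD : ∀ y ∈ U, ∀ (p : Fin n → Fin n → ℝ) (v : Fin r → Fin n → ℝ),
      ContDiffAt ℝ (⊤ : ℕ∞) f (y, p, v) := by
    intro y hy p v
    exact hsmooth.contDiffAt (hOpen.mem_nhds (by simp [hy]))
  have hdiff : ∀ y ∈ U, DifferentiableAt ℝ f (y, idm n, w) := fun y hy =>
    ((hfCD y hy (idm n) w)).differentiableAt (by simp)
  -- direction vectors
  set eW : Fin r → Fin n → (Fin r → Fin n → ℝ) :=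
    fun F K => fun F' J => if F' = F ∧ J = K then 1 else 0 with heW
  -- the w-slot partial derivative as a directional fderiv
  have hpdMw : ∀ y ∈ U, ∀ (F : Fin r) (K : Fin n),
      pdM (fun w2 => L y (idm n) w2) F K w
        = fderiv ℝ f (y, idm n, w)
            ((0 : Fin n → ℝ), (0 : Fin n → Fin n → ℝ), eW F K) := by
    intro y hy F K
    have harg : (fun t : ℝ => L y (idm n)
          (fun F' J => w F' J + (if F' = F ∧ J = K then t else 0)))
        = fun t : ℝ => f ((y, idm n, w)
            + t • ((0 : Fin n → ℝ), (0 : Fin n → Fin n → ℝ), eW F K)) := by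
      funext t
      simp only [hfdef, Prod.smul_mk, Prod.mk_add_mk, smul_zero, add_zero]
      congr 1
      funext F' J
      simp [heW, mul_ite]
    simp only [pdM]
    rw [harg]
    exact deriv_line _ _ (hdiff y hy)
  -- Step 1
  have step1 : ∀ y ∈ U, ∀ (A K : Fin n),
      pdM (fun p' => L y p' w) A K (idm n)
        = (if A = K then (1:ℝ) else 0) * L y (idm n) w
          - ∑ F, w F A * fderiv ℝ f (y, idm n, w)
              ((0 : Fin n → ℝ), (0 : Fin n → Fin n → ℝ), eW F K) := by
    intro y hy A K
    set EP : Fin n → Fin n → ℝ := fun i j => if i = A ∧ j = K then 1 else 0 with hEP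
    set vE : Fin r → Fin n → ℝ := fun F' J => if J = K then w F' A else 0 with hvE
    have hgE : ∀ t : ℝ, (fun i j => idm n i j + (if i = A ∧ j = K then t else 0))
        = idm n + t • EP := by
      intro t; funext i j; simp [hEP, mul_ite]
    have hwE : ∀ t : ℝ,
        mmul w (fun j k => idm n j k + (if j = A ∧ k = K then t else 0))
          = w + t • vE := by
      intro t; funext i k
      have e1 : ∑ j, w i j * idm n j k = w i k := by
        simp [idm, mul_ite, Finset.sum_ite_eq']
      have e2 : ∑ j, w i j * (if j = A ∧ k = K then t else 0) = t * vE i k := by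
        by_cases hk : k = K
        · subst hk
          simp [hvE, mul_ite, Finset.sum_ite_eq', mul_comm]
        · simp [hvE, hk]
      calc mmul w (fun j k => idm n j k + (if j = A ∧ k = K then t else 0)) i k
          = (∑ j, w i j * idm n j k)
            + ∑ j, w i j * (if j = A ∧ k = K then t else 0) := by
            simp only [mmul, mul_add, Finset.sum_add_distrib]
        _ = w i k + t * vE i k := by rw [e1, e2]
        _ = (w + t • vE) i k := by simp
    have hcurve : ∀ t : ℝ, 1 + t * (if A = K then (1:ℝ) else 0) ≠ 0 →
        f ((y, idm n, w) + t • ((0 : Fin n → ℝ), EP, vE))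
          = (1 + t * (if A = K then (1:ℝ) else 0)) * L y (idm n) w := by
      intro t ht
      have hdet : fdet (fun i j => idm n i j + (if i = A ∧ j = K then t else 0))
          = 1 + t * (if A = K then (1:ℝ) else 0) := fdet_idm_add n A K t
      have hcov := hrcov y hy (idm n) w
        (fun i j => idm n i j + (if i = A ∧ j = K then t else 0))
        (by rw [hdet]; exact ht)
      rw [mmul_idm_left, hwE t, hdet, hgE t] at hcov
      calc f ((y, idm n, w) + t • ((0 : Fin n → ℝ), EP, vE))
          = L y (idm n + t • EP) (w + t • vE) := by
            simp [hfdef, Prod.smul_mk, Prod.mk_add_mk]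
        _ = (1 + t * (if A = K then (1:ℝ) else 0)) * L y (idm n) w := hcov
    have hne : ∀ᶠ t : ℝ in nhds 0, 1 + t * (if A = K then (1:ℝ) else 0) ≠ 0 := by
      have hcont : ContinuousAt (fun t : ℝ => 1 + t * (if A = K then (1:ℝ) else 0)) 0 := by
        fun_prop
      have h0 : (1 : ℝ) + 0 * (if A = K then (1:ℝ) else 0) ≠ 0 := by norm_num
      exact hcont.eventually_ne h0
    have hEq : (fun t : ℝ => f ((y, idm n, w) + t • ((0 : Fin n → ℝ), EP, vE)))
        =ᶠ[nhds 0] fun t : ℝ => (1 + t * (if A = K then (1:ℝ) else 0)) * L y (idm n) w :=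
      hne.mono fun t ht => hcurve t ht
    have hD1 : fderiv ℝ f (y, idm n, w) ((0 : Fin n → ℝ), EP, vE)
        = (if A = K then (1:ℝ) else 0) * L y (idm n) w := by
      have h2' : HasDerivAt
          (fun t : ℝ => (1 + t * (if A = K then (1:ℝ) else 0)) * L y (idm n) w)
          ((if A = K then (1:ℝ) else 0) * L y (idm n) w) 0 := by
        simpa using
          ((((hasDerivAt_id (0:ℝ)).mul_const (if A = K then (1:ℝ) else 0)).const_add
            1).mul_const (L y (idm n) w))
      rw [← deriv_line _ _ (hdiff y hy), hEq.deriv_eq, h2'.deriv]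
    have hsum3 : vE = ∑ F, (w F A) • eW F K := by
      funext F' J
      by_cases hJ : J = K
      · subst hJ
        simp [hvE, heW, Finset.sum_apply, mul_ite, Finset.sum_ite_eq]
      · simp [hvE, heW, hJ, Finset.sum_apply]
    have hsplit3 : ((0 : Fin n → ℝ), (0 : Fin n → Fin n → ℝ), vE)
        = ∑ F, (w F A) • ((0 : Fin n → ℝ), (0 : Fin n → Fin n → ℝ), eW F K) := by
      rw [hsum3]
      refine Prod.ext ?_ (Prod.ext ?_ ?_)
      · simp [Prod.fst_sum]
      · simp [Prod.fst_sum, Prod.snd_sum]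
      · simp [Prod.snd_sum]
    have hlin : fderiv ℝ f (y, idm n, w) ((0 : Fin n → ℝ), EP, vE)
        = fderiv ℝ f (y, idm n, w) ((0 : Fin n → ℝ), EP, (0 : Fin r → Fin n → ℝ))
          + ∑ F, w F A * fderiv ℝ f (y, idm n, w)
              ((0 : Fin n → ℝ), (0 : Fin n → Fin n → ℝ), eW F K) := by
      have hadd : ((0 : Fin n → ℝ), EP, vE)
          = ((0 : Fin n → ℝ), EP, (0 : Fin r → Fin n → ℝ))
            + ((0 : Fin n → ℝ), (0 : Fin n → Fin n → ℝ), vE) := by simp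
      rw [hadd, map_add, hsplit3, map_sum]
      congr 1
      refine Finset.sum_congr rfl fun F _ => ?_
      rw [(fderiv ℝ f (y, idm n, w)).map_smul]
      simp
    have hpdMp : pdM (fun p' => L y p' w) A K (idm n)
        = fderiv ℝ f (y, idm n, w) ((0 : Fin n → ℝ), EP, (0 : Fin r → Fin n → ℝ)) := by
      have harg : (fun t : ℝ => L y
            (fun i' j' => idm n i' j' + (if i' = A ∧ j' = K then t else 0)) w)
          = fun t : ℝ => f ((y, idm n, w)
              + t • ((0 : Fin n → ℝ), EP, (0 : Fin r → Fin n → ℝ))) := by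
        funext t
        simp only [hfdef, Prod.smul_mk, Prod.mk_add_mk, smul_zero, add_zero]
        congr 1
        funext i' j'
        simp [hEP, mul_ite]
      simp only [pdM]
      rw [harg]
      exact deriv_line _ _ (hdiff y hy)
    rw [hpdMp]
    rw [hlin] at hD1
    linarith
  -- Step 2 : differentiate Step 1 in x
  set G0 : (Fin n → ℝ) → ℝ := fun y => f (y, idm n, w) with hG0
  set GF : Fin r → Fin n → (Fin n → ℝ) → ℝ :=
    fun F K y => fderiv ℝ f (y, idm n, w)
      ((0 : Fin n → ℝ), (0 : Fin n → Fin n → ℝ), eW F K) with hGF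
  set dB : Fin n → (Fin n → ℝ) := fun B i => if i = B then 1 else 0 with hdB
  have hembCD : ContDiffAt ℝ (⊤ : ℕ∞)
      (fun y : Fin n → ℝ => ((y, idm n, w) :
        (Fin n → ℝ) × (Fin n → Fin n → ℝ) × (Fin r → Fin n → ℝ))) x :=
    ContDiffAt.prodMk contDiffAt_id contDiffAt_const
  have hG0CD : ContDiffAt ℝ (⊤ : ℕ∞) G0 x := by
    have := (hfCD x hx (idm n) w).comp x hembCD; exact this
  have hGFCD : ∀ F K, ContDiffAt ℝ (⊤ : ℕ∞) (GF F K) x := by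
    intro F K
    have h1 : ContDiffAt ℝ (⊤ : ℕ∞) (fun y : Fin n → ℝ => fderiv ℝ f (y, idm n, w)) x :=
      (((hfCD x hx (idm n) w)).fderiv_right (by exact_mod_cast le_top)).comp x hembCD
    exact h1.clm_apply contDiffAt_const
  have hid : ∀ (B : Fin n) (t : ℝ),
      (fun i' => x i' + (if i' = B then t else 0)) = x + t • dB B := by
    intro B t; funext i; simp [hdB, mul_ite]
  have hG0line : ∀ B, HasDerivAt (fun t : ℝ => G0 (x + t • dB B))
      (fderiv ℝ G0 x (dB B)) 0 := fun B =>
    hasDerivAt_line _ _ (hG0CD.differentiableAt (by simp))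
  have hGFline : ∀ F K B, HasDerivAt (fun t : ℝ => GF F K (x + t • dB B))
      (fderiv ℝ (GF F K) x (dB B)) 0 := fun F K B =>
    hasDerivAt_line _ _ ((hGFCD F K).differentiableAt (by simp))
  have hmem : ∀ B : Fin n, ∀ᶠ t : ℝ in nhds 0, (x + t • dB B) ∈ U := by
    intro B
    have hc : ContinuousAt (fun t : ℝ => x + t • dB B) 0 := by fun_prop
    have h0 : U ∈ nhds (x + (0:ℝ) • dB B) := by
      simpa using hU.mem_nhds hx
    exact hc.eventually_mem h0
  have hi : ∀ B, pdV (fun x' => L x' (idm n) w) B x = fderiv ℝ G0 x (dB B) := by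
    intro B
    have harg : (fun t : ℝ => L (fun i' => x i' + (if i' = B then t else 0)) (idm n) w)
        = fun t : ℝ => G0 (x + t • dB B) := by
      funext t; rw [hid B t]
    simp only [pdV]
    rw [harg, (hG0line B).deriv]
  have hii : ∀ (F : Fin r) (A B : Fin n),
      pdV (fun x' => pdM (fun w2 => L x' (idm n) w2) F A w) B x
        = fderiv ℝ (GF F A) x (dB B) := by
    intro F A B
    have harg : (fun t : ℝ => pdM
          (fun w2 => L (fun i' => x i' + (if i' = B then t else 0)) (idm n) w2) F A w)
        = fun t : ℝ => pdM (fun w2 => L (x + t • dB B) (idm n) w2) F A w := by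
      funext t; rw [hid B t]
    have heq : (fun t : ℝ => pdM (fun w2 => L (x + t • dB B) (idm n) w2) F A w)
        =ᶠ[nhds 0] fun t : ℝ => GF F A (x + t • dB B) :=
      (hmem B).mono fun t ht => hpdMw _ ht F A
    simp only [pdV]
    rw [harg, heq.deriv_eq, (hGFline F A B).deriv]
  have hiii : ∀ A K : Fin n,
      pdV (fun x' => pdM (fun p' => L x' p' w) A K (idm n)) A x
        = (if A = K then (1:ℝ) else 0) * fderiv ℝ G0 x (dB A)
          - ∑ F, w F A * fderiv ℝ (GF F K) x (dB A) := by
    intro A K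
    have harg : (fun t : ℝ => pdM
          (fun p' => L (fun i' => x i' + (if i' = A then t else 0)) p' w) A K (idm n))
        = fun t : ℝ => pdM (fun p' => L (x + t • dB A) p' w) A K (idm n) := by
      funext t; rw [hid A t]
    have heq : (fun t : ℝ => pdM (fun p' => L (x + t • dB A) p' w) A K (idm n))
        =ᶠ[nhds 0] fun t : ℝ => (if A = K then (1:ℝ) else 0) * G0 (x + t • dB A)
            - ∑ F, w F A * GF F K (x + t • dB A) :=
      (hmem A).mono fun t ht => step1 _ ht A K
    have hR : HasDerivAt (fun t : ℝ =>
          (if A = K then (1:ℝ) else 0) * G0 (x + t • dB A)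
            - ∑ F, w F A * GF F K (x + t • dB A))
        ((if A = K then (1:ℝ) else 0) * fderiv ℝ G0 x (dB A)
          - ∑ F, w F A * fderiv ℝ (GF F K) x (dB A)) 0 :=
      ((hG0line A).const_mul _).sub
        (HasDerivAt.fun_sum fun F _ => ((hGFline F K A)).const_mul (w F A))
    simp only [pdV]
    rw [harg, heq.deriv_eq, hR.deriv]
  -- assemble
  simp only [hiii, hi, hii]
  have h1 : ∀ K : Fin n, ∑ A, w' K *
        ((if A = K then (1:ℝ) else 0) * fderiv ℝ G0 x (dB A)
          - ∑ F, w F A * fderiv ℝ (GF F K) x (dB A))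
      = w' K * fderiv ℝ G0 x (dB K)
        - ∑ F, ∑ A, w' K * w F A * fderiv ℝ (GF F K) x (dB A) := by
    intro K
    rw [show (∑ A, w' K *
        ((if A = K then (1:ℝ) else 0) * fderiv ℝ G0 x (dB A)
          - ∑ F, w F A * fderiv ℝ (GF F K) x (dB A)))
      = ∑ A, (w' K * ((if A = K then (1:ℝ) else 0) * fderiv ℝ G0 x (dB A))
          - ∑ F, w' K * (w F A * fderiv ℝ (GF F K) x (dB A))) from
      Finset.sum_congr rfl fun A _ => by rw [mul_sub, Finset.mul_sum]]
    rw [Finset.sum_sub_distrib]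
    congr 1
    · simp [mul_ite, ite_mul, Finset.sum_ite_eq']
    · rw [Finset.sum_comm]
      exact Finset.sum_congr rfl fun F _ => Finset.sum_congr rfl fun A _ => by ring
  rw [Finset.sum_congr rfl fun K _ => h1 K, Finset.sum_sub_distrib]
  congr 1
  exact Finset.sum_congr rfl fun A _ => congrArg _ (hi A).symm
end
end
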